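/- Let C be an n×n complex matrix all of whose eigenvalues are non-defective (geometric multiplicity equals algebraic multiplicity), and let μ = min{Re λ : λ eigenvalue of C}. Let w₁,…,wₙ be normalized (right) eigenvectors of C* forming a basis of ℂⁿ, and let b₁,…,bₙ > 0. Then P := Σⱼ bⱼ wⱼwⱼ* is a positive definite Hermitian matrix satisfying C*P + PC ≥ 2μP. -/

import Mathlib

open Matrix Complex Finset
open scoped ComplexOrder

lemma mul_vecMulVec' {n : ℕ} (A : Matrix (Fin n) (Fin n) ℂ) (v u : Fin n → ℂ) :
    A * vecMulVec v u = vecMulVec (A.mulVec v) u := by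
  ext i j
  simp [mul_apply, vecMulVec_apply, mulVec, dotProduct, Finset.sum_mul, mul_assoc]

lemma vecMulVec_mul' {n : ℕ} (A : Matrix (Fin n) (Fin n) ℂ) (v u : Fin n → ℂ) :
    vecMulVec v u * A = vecMulVec v (vecMul u A) := by
  ext i j
  simp [mul_apply, vecMulVec_apply, vecMul, dotProduct, Finset.mul_sum, mul_assoc]

lemma vecMulVec_smul_left {n : ℕ} (c : ℂ) (v u : Fin n → ℂ) :
    vecMulVec (c • v) u = c • vecMulVec v u := by
  ext i j; simp [vecMulVec_apply, mul_assoc]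

lemma vecMulVec_smul_right {n : ℕ} (c : ℂ) (v u : Fin n → ℂ) :
    vecMulVec v (c • u) = c • vecMulVec v u := by
  ext i j; simp [vecMulVec_apply]; ring

lemma qf_vecMulVec {n : ℕ} (v x : Fin n → ℂ) :
    star x ⬝ᵥ (vecMulVec v (star v)).mulVec x
      = ((starRingEnd ℂ) (star v ⬝ᵥ x)) * (star v ⬝ᵥ x) := by
  have h1 : (vecMulVec v (star v)).mulVec x = (star v ⬝ᵥ x) • v := by
    ext i
    simp [mulVec, vecMulVec_apply, dotProduct, Finset.mul_sum, mul_assoc, mul_comm, mul_left_comm]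
  rw [h1, dotProduct_smul]
  have h2 : star x ⬝ᵥ v = (starRingEnd ℂ) (star v ⬝ᵥ x) := by
    simp [dotProduct, map_sum, mul_comm]
  rw [h2]
  ring_nf

lemma herm_vecMulVec {n : ℕ} (r : ℝ) (v : Fin n → ℂ) :
    ((r : ℂ) • vecMulVec v (star v)).IsHermitian := by
  unfold Matrix.IsHermitian
  ext i j
  simp [vecMulVec_apply, conjTranspose_apply, mul_comm, Complex.conj_ofReal]

lemma psd_smul_vecMulVec {n : ℕ} (r : ℝ) (hr : 0 ≤ r) (v : Fin n → ℂ) :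
    ((r : ℂ) • vecMulVec v (star v)).PosSemidef := by
  refine posSemidef_iff_dotProduct_mulVec.mpr ⟨herm_vecMulVec r v, fun x => ?_⟩
  rw [smul_mulVec, dotProduct_smul, smul_eq_mul, qf_vecMulVec]
  rw [Complex.conj_mul']
  rw [← Complex.ofReal_pow, ← Complex.ofReal_mul]
  rw [Complex.zero_le_real]
  positivity

lemma sum_mulVec'' {n : ℕ} (A : Fin n → Matrix (Fin n) (Fin n) ℂ) (x : Fin n → ℂ) :
    (∑ j, A j) *ᵥ x = ∑ j, A j *ᵥ x := by
  ext i
  simp only [mulVec, dotProduct, Matrix.sum_apply, Finset.sum_apply, Finset.sum_mul]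
  rw [Finset.sum_comm]

lemma dotProduct_sum'' {n : ℕ} (v : Fin n → ℂ) (u : Fin n → Fin n → ℂ) :
    v ⬝ᵥ (∑ j, u j) = ∑ j, v ⬝ᵥ u j := by
  simp [dotProduct, Finset.mul_sum, Finset.sum_apply]
  rw [Finset.sum_comm]

theorem stmt1 (n : ℕ) (C : Matrix (Fin n) (Fin n) ℂ) (μ : ℝ)
    (hμ1 : ∀ lam : ℂ, (∃ v : Fin n → ℂ, v ≠ 0 ∧ C.mulVec v = lam • v) → μ ≤ lam.re)
    (hμ2 : ∃ lam : ℂ, (∃ v : Fin n → ℂ, v ≠ 0 ∧ C.mulVec v = lam • v) ∧ lam.re = μ)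
    (w : Fin n → Fin n → ℂ) (lam : Fin n → ℂ)
    (hnorm : ∀ j, ∑ i, ‖w j i‖ ^ 2 = 1)
    (heig : ∀ j, Cᴴ.mulVec (w j) = (starRingEnd ℂ) (lam j) • w j)
    (heiglam : ∀ j, ∃ v : Fin n → ℂ, v ≠ 0 ∧ C.mulVec v = lam j • v)
    (hbasis : LinearIndependent ℂ w)
    (b : Fin n → ℝ) (hb : ∀ j, 0 < b j) :
    (∑ j, (b j : ℂ) • vecMulVec (w j) (star (w j))).PosDef ∧
    (Cᴴ * (∑ j, (b j : ℂ) • vecMulVec (w j) (star (w j))) +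
        (∑ j, (b j : ℂ) • vecMulVec (w j) (star (w j))) * C -
        ((2 * μ : ℝ) : ℂ) • ∑ j, (b j : ℂ) • vecMulVec (w j) (star (w j))).PosSemidef := by
  set P := ∑ j, (b j : ℂ) • vecMulVec (w j) (star (w j)) with hPdef
  -- n is positive
  obtain ⟨l0, ⟨v0, hv0, -⟩, -⟩ := hμ2
  have hn : 0 < n := by
    rcases Nat.eq_zero_or_pos n with h | h
    · exfalso; apply hv0; funext i; exact absurd i.2 (by omega)
    · exact h
  haveI : Nonempty (Fin n) := ⟨⟨0, hn⟩⟩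
  -- quadratic form of P
  have hq : ∀ x : Fin n → ℂ, star x ⬝ᵥ P *ᵥ x
      = ((∑ j, b j * Complex.normSq (star (w j) ⬝ᵥ x) : ℝ) : ℂ) := by
    intro x
    rw [hPdef, sum_mulVec'', dotProduct_sum'']
    push_cast
    refine Finset.sum_congr rfl fun j _ => ?_
    rw [smul_mulVec, dotProduct_smul, smul_eq_mul, qf_vecMulVec,
      ← Complex.normSq_eq_conj_mul_self]
  -- Hermitian of P
  have hPherm : P.IsHermitian := by
    unfold Matrix.IsHermitian
    rw [hPdef, conjTranspose_sum]
    exact Finset.sum_congr rfl fun j _ => herm_vecMulVec (b j) (w j)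
  -- PosDef
  have hPD : P.PosDef := by
    refine posDef_iff_dotProduct_mulVec.mpr ⟨hPherm, fun x hx => ?_⟩
    rw [hq x, Complex.zero_lt_real]
    -- some j has nonzero inner product
    have hex : ∃ j, star (w j) ⬝ᵥ x ≠ 0 := by
      by_contra h
      push_neg at h
      apply hx
      have hcard : Fintype.card (Fin n) = Module.finrank ℂ (Fin n → ℂ) := by simp
      set B := basisOfLinearIndependentOfCardEqFinrank hbasis hcard with hB
      have hrep : ∑ j, B.repr x j • w j = x := by
        have := B.sum_repr x
        rwa [hB, coe_basisOfLinearIndependentOfCardEqFinrank] at this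
      have h2 : ∀ j, star x ⬝ᵥ w j = 0 := by
        intro j
        have := congrArg (starRingEnd ℂ) (h j)
        simpa [dotProduct, map_sum, mul_comm] using this
      have h3 : star x ⬝ᵥ x = 0 := by
        have hstep : star x ⬝ᵥ x = star x ⬝ᵥ (∑ j, B.repr x j • w j) := by rw [hrep]
        rw [hstep, dotProduct_sum'']
        refine Finset.sum_eq_zero fun j _ => ?_
        rw [dotProduct_smul, h2 j, smul_zero]
      exact dotProduct_star_self_eq_zero.mp h3
    obtain ⟨j0, hj0⟩ := hex
    refine Finset.sum_pos' (fun j _ => mul_nonneg (hb j).le (Complex.normSq_nonneg _))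
      ⟨j0, Finset.mem_univ j0, mul_pos (hb j0) ?_⟩
    exact Complex.normSq_pos.mpr hj0
  refine ⟨hPD, ?_⟩
  -- matrix identity
  have hvm : ∀ j, vecMul (star (w j)) C = lam j • star (w j) := by
    intro j
    have h := congrArg star (heig j)
    rw [star_mulVec, conjTranspose_conjTranspose] at h
    rw [h, star_smul]
    simp
  have hid : Cᴴ * P + P * C - ((2 * μ : ℝ) : ℂ) • P
      = ∑ j, ((b j * (2 * (lam j).re - 2 * μ) : ℝ) : ℂ) • vecMulVec (w j) (star (w j)) := by
    rw [hPdef, Finset.mul_sum, Finset.sum_mul, Finset.smul_sum, ← Finset.sum_add_distrib,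
      ← Finset.sum_sub_distrib]
    refine Finset.sum_congr rfl fun j _ => ?_
    rw [Matrix.mul_smul, Matrix.smul_mul, mul_vecMulVec', vecMulVec_mul', heig j, hvm j,
      vecMulVec_smul_left, vecMulVec_smul_right, smul_smul, smul_smul, smul_smul,
      ← add_smul, ← sub_smul]
    congr 1
    have : (b j : ℂ) * (starRingEnd ℂ) (lam j) + (b j : ℂ) * lam j
        = (b j : ℂ) * (lam j + (starRingEnd ℂ) (lam j)) := by ring
    rw [this, Complex.add_conj]
    push_cast
    ring
  rw [hid]
  refine Finset.sum_induction _ Matrix.PosSemidef (fun a c ha hc => ha.add hc) ?_ ?_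
  · exact ⟨by simp [Matrix.IsHermitian], fun x => by simp⟩
  · intro j _
    refine psd_smul_vecMulVec _ ?_ _
    have := hμ1 (lam j) (heiglam j)
    have hbj := (hb j).le
    nlinarith
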